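/- arXiv:1901.08654 — 4 statements merged into one kernel-verified Lean document; each statement's English description precedes it below -/
import Mathlib

section
/- Let N ≥ 2 and let X_1, X_2, …, X_t be i.i.d. random variables taking values in {1, …, N} with P(X_s = k) = f_k for each k. Fix indices i and j with f_j > f_i. Then the probability that the empirical count of i is at least the empirical count of j, i.e. P(#{s ≤ t : X_s = i} ≥ #{s ≤ t : X_s = j}), is at most exp(-t·(√f_j - √f_i)²). -/
open MeasureTheory ProbabilityTheory

/-- Chernoff bound for empirical arm-pull counts. If `X_1, …, X_t` are
i.i.d. with values in `{1, …, N}` and `P(X_s = k) = f k`, and `f j > f i`, then the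
probability that the empirical count of `i` is at least the empirical count of `j`
is at most `exp (-t · (√(f j) - √(f i))²)`. -/
theorem chernoff_empirical_counts {Ω : Type*} [MeasurableSpace Ω]
    (P : Measure Ω) [IsProbabilityMeasure P]
    (N : ℕ) (hN : 2 ≤ N) (f : Fin N → ℝ) (t : ℕ)
    (X : ℕ → Ω → Fin N) (hX : ∀ s, Measurable (X s))
    (hindep : iIndepFun X P)
    (hdist : ∀ (s : ℕ) (k : Fin N), P {ω | X s ω = k} = ENNReal.ofReal (f k))
    (i j : Fin N) (hij : f i < f j) :
    P {ω | ((Finset.range t).filter fun s => X s ω = j).card ≤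
        ((Finset.range t).filter fun s => X s ω = i).card} ≤
      ENNReal.ofReal (Real.exp (-(t : ℝ) * (Real.sqrt (f j) - Real.sqrt (f i)) ^ 2)) := by
  classical
  have hij' : i ≠ j := by rintro rfl; exact lt_irrefl _ hij
  set p : ℝ := (ENNReal.ofReal (f i)).toReal with hpdef
  set q : ℝ := (ENNReal.ofReal (f j)).toReal with hqdef
  have hp0 : 0 ≤ p := ENNReal.toReal_nonneg
  have hq0 : 0 ≤ q := ENNReal.toReal_nonneg
  have hsqmax : ∀ a : ℝ, Real.sqrt (max a 0) = Real.sqrt a := by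
    intro a
    rcases le_total a 0 with h | h
    · rw [max_eq_right h, Real.sqrt_zero, eq_comm, Real.sqrt_eq_zero']
      exact h
    · rw [max_eq_left h]
  have hsp : Real.sqrt (f i) = Real.sqrt p := by
    rw [hpdef, ENNReal.toReal_ofReal', hsqmax]
  have hsq : Real.sqrt (f j) = Real.sqrt q := by
    rw [hqdef, ENNReal.toReal_ofReal', hsqmax]
  -- the Chernoff machinery
  set Y : ℕ → Ω → ℝ := fun s ω =>
      (if X s ω = i then (1:ℝ) else 0) - (if X s ω = j then 1 else 0) with hYdef
  have key : ∀ l : ℝ, 0 ≤ l →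
      (P {ω | ((Finset.range t).filter fun s => X s ω = j).card ≤
        ((Finset.range t).filter fun s => X s ω = i).card}).toReal ≤
      (1 + (Real.exp l - 1) * p + (Real.exp (-l) - 1) * q) ^ t := by
    intro l hl
    set φ : Fin N → ℝ := fun k => (if k = i then (1:ℝ) else 0) - (if k = j then 1 else 0)
      with hφdef
    have hφmeas : Measurable φ := measurable_of_countable φ
    have hYeq : ∀ s, Y s = φ ∘ X s := fun s => rfl
    have hYmeas : ∀ s, Measurable (Y s) := fun s => hφmeas.comp (hX s)
    have hYindep : iIndepFun Y P :=
      hindep.comp (fun _ => φ) (fun _ => hφmeas)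
    set S : Ω → ℝ := fun ω => ∑ s ∈ Finset.range t, Y s ω with hSdef
    have hSfun : S = ∑ s ∈ Finset.range t, Y s := by
      funext ω; rw [Finset.sum_apply]
    -- set equality
    have hset : {ω | ((Finset.range t).filter fun s => X s ω = j).card ≤
        ((Finset.range t).filter fun s => X s ω = i).card} = {ω | (0:ℝ) ≤ S ω} := by
      ext ω
      simp only [Set.mem_setOf_eq, hSdef, hYdef, Finset.sum_sub_distrib,
        Finset.sum_boole, sub_nonneg, Nat.cast_le]
    -- measurability and integrability
    have hSmeas : Measurable S := by
      apply Finset.measurable_sum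
      exact fun s _ => hYmeas s
    have hYle : ∀ s ω, Y s ω ≤ 1 := by
      intro s ω
      simp only [hYdef]
      split_ifs <;> norm_num
    have hSle : ∀ ω, S ω ≤ t := by
      intro ω
      calc S ω ≤ ∑ s ∈ Finset.range t, (1:ℝ) :=
            Finset.sum_le_sum fun s _ => hYle s ω
        _ = t := by simp
    have hint : ∀ (T : Ω → ℝ), Measurable T → (∀ ω, T ω ≤ t) →
        Integrable (fun ω => Real.exp (l * T ω)) P := by
      intro T hTmeas hTle
      refine Integrable.mono' (integrable_const (Real.exp (l * t)))
        ((hTmeas.const_mul l).exp.aestronglyMeasurable) ?_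
      filter_upwards with ω
      rw [Real.norm_eq_abs, abs_of_pos (Real.exp_pos _)]
      exact Real.exp_le_exp.mpr (mul_le_mul_of_nonneg_left (hTle ω) hl)
    -- Chernoff bound
    have hch := measure_ge_le_exp_mul_mgf (μ := P) (X := S) 0 hl (hint S hSmeas hSle)
    rw [mul_zero, Real.exp_zero, one_mul] at hch
    rw [hset]
    refine hch.trans ?_
    rw [hSfun, hYindep.mgf_sum hYmeas]
    -- compute each mgf
    have hterm : ∀ s, mgf (Y s) P l
        = 1 + (Real.exp l - 1) * p + (Real.exp (-l) - 1) * q := by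
      intro s
      have hmeasset : ∀ k : Fin N, MeasurableSet {ω | X s ω = k} :=
        fun k => (hX s) (measurableSet_singleton k)
      have hrepr : (fun ω => Real.exp (l * Y s ω)) = fun ω =>
          ∑ k : Fin N, Set.indicator {ω' | X s ω' = k}
            (fun _ => Real.exp (l * φ k)) ω := by
        funext ω
        rw [Finset.sum_eq_single (X s ω)]
        · rw [Set.indicator_of_mem (by simp : ω ∈ {ω' | X s ω' = X s ω})]
        · intro k _ hk
          apply Set.indicator_of_notMem
          intro h
          exact hk (Eq.symm h)
        · simp
      have hcalc : mgf (Y s) P l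
          = ∑ k : Fin N, (ENNReal.ofReal (f k)).toReal * Real.exp (l * φ k) := by
        rw [mgf, hrepr, integral_finset_sum]
        · refine Finset.sum_congr rfl fun k _ => ?_
          rw [integral_indicator_const _ (hmeasset k), measureReal_def, hdist s k, smul_eq_mul]
        · exact fun k _ => (integrable_const _).indicator (hmeasset k)
      have hsum1 : ∑ k : Fin N, (ENNReal.ofReal (f k)).toReal = 1 := by
        have h1 : (∑ k : Fin N, ENNReal.ofReal (f k)) = 1 := by
          have := sum_measure_preimage_singleton (μ := P) (f := X s) Finset.univ
            (fun k _ => (hX s) (measurableSet_singleton k))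
          simp only [Finset.coe_univ, Set.preimage_univ, measure_univ] at this
          rw [← this]
          refine Finset.sum_congr rfl fun k _ => ?_
          rw [← hdist s k]
          rfl
        rw [← ENNReal.toReal_sum (fun k _ => ENNReal.ofReal_ne_top), h1, ENNReal.toReal_one]
      rw [hcalc]
      have hsplit : ∀ k : Fin N, (ENNReal.ofReal (f k)).toReal * Real.exp (l * φ k)
          = (ENNReal.ofReal (f k)).toReal
            + (ENNReal.ofReal (f k)).toReal * (Real.exp (l * φ k) - 1) := by
        intro k; ring
      rw [Finset.sum_congr rfl (fun k _ => hsplit k), Finset.sum_add_distrib, hsum1]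
      have h2 : ∑ k : Fin N, (ENNReal.ofReal (f k)).toReal * (Real.exp (l * φ k) - 1)
          = (Real.exp l - 1) * p + (Real.exp (-l) - 1) * q := by
        rw [← Finset.sum_subset (Finset.subset_univ ({i, j} : Finset (Fin N)))
          (fun k _ hk => ?_), Finset.sum_pair hij']
        · have hφi : φ i = 1 := by simp [hφdef, hij']
          have hφj : φ j = -1 := by simp [hφdef, hij'.symm]
          rw [hφi, hφj, hpdef, hqdef]
          ring_nf
        · have hki : k ≠ i := by
            intro h; exact hk (by simp [h])
          have hkj : k ≠ j := by
            intro h; exact hk (by simp [h])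
          have : φ k = 0 := by simp [hφdef, hki, hkj]
          rw [this, mul_zero, Real.exp_zero]
          ring
      rw [h2]
      ring
    rw [Finset.prod_congr rfl (fun s _ => hterm s), Finset.prod_const, Finset.card_range]
  -- choose the optimal parameter
  set d : ℝ := (Real.sqrt q - Real.sqrt p) ^ 2 with hddef
  have hpq1 : p + q ≤ 1 := by
    have hd : Disjoint {ω | X 0 ω = i} {ω | X 0 ω = j} := by
      rw [Set.disjoint_left]
      rintro ω hi hj
      exact hij' (hi ▸ hj ▸ rfl)
    have hle : ENNReal.ofReal (f i) + ENNReal.ofReal (f j) ≤ 1 := by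
      rw [← hdist 0 i, ← hdist 0 j,
        ← measure_union hd ((hX 0) (measurableSet_singleton j))]
      exact prob_le_one
    calc p + q = (ENNReal.ofReal (f i) + ENNReal.ofReal (f j)).toReal :=
          (ENNReal.toReal_add ENNReal.ofReal_ne_top ENNReal.ofReal_ne_top).symm
      _ ≤ (1 : ENNReal).toReal := ENNReal.toReal_mono ENNReal.one_ne_top hle
      _ = 1 := ENNReal.toReal_one
  have hbound : ∃ l : ℝ, 0 ≤ l ∧
      1 + (Real.exp l - 1) * p + (Real.exp (-l) - 1) * q ≤ Real.exp (-d) := by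
    rcases hq0.eq_or_lt with hq | hq
    · -- q = 0, hence p = 0 (since f i < f j ≤ 0)
      have hfj : f j ≤ 0 := by
        by_contra h
        push_neg at h
        rw [hqdef, ENNReal.toReal_ofReal h.le] at hq
        exact absurd hq.symm (ne_of_gt h)
      have hp : p = 0 := by
        rw [hpdef, ENNReal.toReal_ofReal', max_eq_right (le_of_lt (lt_of_lt_of_le hij hfj))]
      refine ⟨0, le_rfl, ?_⟩
      have hd0 : d = 0 := by
        simp [hddef, ← hq, hp]
      rw [hd0, hp, ← hq]
      simp [Real.exp_zero]
    · rcases hp0.eq_or_lt with hp | hp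
      · -- p = 0, 0 < q
        set r : ℝ := (Real.exp (-q) - 1 + q) / q with hrdef
        have hnum : 0 < Real.exp (-q) - 1 + q := by
          have := Real.add_one_lt_exp (x := -q) (by linarith : (-q : ℝ) ≠ 0)
          linarith
        have hrpos : 0 < r := div_pos hnum hq
        have hr1 : r ≤ 1 := by
          rw [hrdef, div_le_one hq]
          have : Real.exp (-q) ≤ 1 := by
            rw [← Real.exp_zero]
            exact Real.exp_le_exp.mpr (by linarith)
          linarith
        refine ⟨-Real.log r, by simpa using Real.log_nonpos hrpos.le hr1, ?_⟩
        rw [← hp, neg_neg, Real.exp_log hrpos]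
        have hrq : r * q = Real.exp (-q) - 1 + q := div_mul_cancel₀ _ (ne_of_gt hq)
        have hdq : d = q := by
          rw [hddef, ← hp, Real.sqrt_zero, sub_zero, Real.sq_sqrt hq0]
        rw [hdq]
        have hexp : (r - 1) * q = r * q - q := by ring
        rw [mul_zero]
        linarith
      · -- 0 < p < q
        have hfi : 0 < f i := by
          by_contra h
          push_neg at h
          rw [hpdef, ENNReal.toReal_ofReal', max_eq_right h] at hp
          exact lt_irrefl 0 hp
        have hpv : p = f i := by rw [hpdef, ENNReal.toReal_ofReal hfi.le]
        have hqv : q = f j := by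
          rw [hqdef, ENNReal.toReal_ofReal (le_of_lt (hfi.trans hij))]
        have hpq : p < q := by rw [hpv, hqv]; exact hij
        have hsp0 : 0 < Real.sqrt p := Real.sqrt_pos.mpr hp
        have hsq0 : 0 < Real.sqrt q := Real.sqrt_pos.mpr hq
        have hratio : 1 ≤ Real.sqrt q / Real.sqrt p :=
          (one_le_div hsp0).mpr (Real.sqrt_le_sqrt hpq.le)
        refine ⟨Real.log (Real.sqrt q / Real.sqrt p), Real.log_nonneg hratio, ?_⟩
        have hexpl : Real.exp (Real.log (Real.sqrt q / Real.sqrt p))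
            = Real.sqrt q / Real.sqrt p := Real.exp_log (div_pos hsq0 hsp0)
        have hexpnl : Real.exp (-Real.log (Real.sqrt q / Real.sqrt p))
            = Real.sqrt p / Real.sqrt q := by
          rw [Real.exp_neg, hexpl, inv_div]
        have e1 : Real.sqrt q / Real.sqrt p * p = Real.sqrt q * Real.sqrt p := by
          rw [div_mul_eq_mul_div, mul_div_assoc, Real.div_sqrt]
        have e2 : Real.sqrt p / Real.sqrt q * q = Real.sqrt p * Real.sqrt q := by
          rw [div_mul_eq_mul_div, mul_div_assoc, Real.div_sqrt]
        have hpp : Real.sqrt p * Real.sqrt p = p := Real.mul_self_sqrt hp0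
        have hqq : Real.sqrt q * Real.sqrt q = q := Real.mul_self_sqrt hq0
        have hMeq : 1 + (Real.exp (Real.log (Real.sqrt q / Real.sqrt p)) - 1) * p
            + (Real.exp (-Real.log (Real.sqrt q / Real.sqrt p)) - 1) * q = 1 - d := by
          rw [hexpl, hexpnl, hddef]
          nlinarith [e1, e2, hpp, hqq]
        rw [hMeq]
        have := Real.add_one_le_exp (-d)
        linarith
  obtain ⟨l, hl, hMle⟩ := hbound
  have hM0 : 0 ≤ 1 + (Real.exp l - 1) * p + (Real.exp (-l) - 1) * q := by
    nlinarith [Real.exp_pos l, Real.exp_pos (-l), Real.add_one_le_exp l,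
      Real.add_one_le_exp (-l), hp0, hq0]
  have hfinal : (1 + (Real.exp l - 1) * p + (Real.exp (-l) - 1) * q) ^ t
      ≤ Real.exp (-(t:ℝ) * (Real.sqrt (f j) - Real.sqrt (f i)) ^ 2) := by
    calc (1 + (Real.exp l - 1) * p + (Real.exp (-l) - 1) * q) ^ t
        ≤ Real.exp (-d) ^ t := pow_le_pow_left₀ hM0 hMle t
      _ = Real.exp ((t:ℝ) * (-d)) := (Real.exp_nat_mul _ t).symm
      _ = Real.exp (-(t:ℝ) * (Real.sqrt (f j) - Real.sqrt (f i)) ^ 2) := by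
          rw [hsp, hsq, hddef]; ring_nf
  rw [ENNReal.le_ofReal_iff_toReal_le (measure_ne_top P _) (Real.exp_nonneg _)]
  exact (key l hl).trans hfinal
end

section
/- Let N ≥ 2, let μ : {1,…,N} → ℝ be arm means with a unique maximizer j* (write μ* = μ_{j*}), and let h_1, h_2, … be i.i.d. random variables on {1,…,N} with P(h_s = k) = f_k, where f_{j*} > f_i for every i ≠ j*. For each t let A_t be any random variable, measurable with respect to h_1, …, h_t, satisfying #{s ≤ t : h_s = A_t} ≥ #{s ≤ t : h_s = i} for all i (i.e. A_t is a most frequently pulled arm so far). Then for every horizon T, the expected regret satisfies E[∑_{t=1}^T (μ* - μ_{A_t})] ≤ ∑_{i ≠ j*} (μ* - μ_i) / (√f_{j*} - √f_i)². -/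
open MeasureTheory ProbabilityTheory

lemma integral_comp_fin' {Ω : Type*} [MeasurableSpace Ω] (P : Measure Ω) [IsProbabilityMeasure P]
    {N : ℕ} (h : Ω → Fin N) (hm : Measurable h) (w : Fin N → ℝ) :
    ∫ ω, w (h ω) ∂P = ∑ k : Fin N, w k * (P {ω | h ω = k}).toReal := by
  classical
  have hrw : (fun ω => w (h ω)) = fun ω =>
      ∑ k : Fin N, Set.indicator {ω' | h ω' = k} (fun _ => w k) ω := by
    funext ω
    rw [Finset.sum_eq_single (h ω)]
    · rw [Set.indicator_of_mem (by exact rfl)]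
    · intro k _ hk
      exact Set.indicator_of_notMem (fun hc => hk (by simpa using hc.symm)) _
    · intro hn; exact absurd (Finset.mem_univ _) hn
  rw [hrw, integral_finset_sum]
  · refine Finset.sum_congr rfl fun k _ => ?_
    rw [integral_indicator_const (μ := P) (w k) (s := {ω' | h ω' = k}) (hm (measurableSet_singleton k))]
    rw [smul_eq_mul, mul_comm]; rfl
  · intro k _
    exact (integrable_const (w k)).indicator (hm (measurableSet_singleton k))

/-- assisting a noisily-optimal human has finite expected regret.
The human's pulls `h 0, h 1, …` are i.i.d. with `P(h s = k) = f k`, where the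
(unique) optimal arm `j*` has strictly largest probability. At each round `t`
the robot plays `A t`, a most frequently pulled arm among `h 0, …, h t`
(measurable with respect to those pulls). Then for every horizon `T`, the expected
regret is at most `∑_{i ≠ j*} (μ* - μ i) / (√(f j*) - √(f i))²`. -/
theorem most_frequent_arm_finite_regret {Ω : Type*} [MeasurableSpace Ω]
    (P : Measure Ω) [IsProbabilityMeasure P]
    (N : ℕ) (hN : 2 ≤ N) (μa : Fin N → ℝ) (jstar : Fin N)
    (hmax : ∀ i, i ≠ jstar → μa i < μa jstar)
    (f : Fin N → ℝ)
    (h : ℕ → Ω → Fin N) (hmeas : ∀ s, Measurable (h s))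
    (hindep : iIndepFun h P)
    (hdist : ∀ (s : ℕ) (k : Fin N), P {ω | h s ω = k} = ENNReal.ofReal (f k))
    (hf : ∀ i, i ≠ jstar → f i < f jstar)
    (A : ℕ → Ω → Fin N)
    (hAmeas : ∀ t : ℕ,
      Measurable[MeasurableSpace.comap (fun ω (s : Fin (t + 1)) => h s.val ω) inferInstance]
        (A t))
    (hAfreq : ∀ (t : ℕ) (ω : Ω) (i : Fin N),
      ((Finset.range (t + 1)).filter fun s => h s ω = i).card ≤
        ((Finset.range (t + 1)).filter fun s => h s ω = A t ω).card)
    (T : ℕ) :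
    ∑ t ∈ Finset.range T, ∫ ω, (μa jstar - μa (A t ω)) ∂P ≤
      ∑ i ∈ Finset.univ.filter (· ≠ jstar),
        (μa jstar - μa i) / (Real.sqrt (f jstar) - Real.sqrt (f i)) ^ 2 := by
  classical
  have hAm : ∀ t, Measurable (A t) := fun t =>
    (hAmeas t).mono (Measurable.comap_le (measurable_pi_lambda _ fun s => hmeas s.val)) le_rfl
  have hPval : ∀ (s : ℕ) (k : Fin N), (P {ω | h s ω = k}).toReal = max (f k) 0 := by
    intro s k; rw [hdist s k]; exact ENNReal.toReal_ofReal'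
  have hsum_max : ∑ k : Fin N, max (f k) 0 = 1 := by
    have h1 : ∑ k : Fin N, P {ω | h 0 ω = k} = 1 := by
      have h2 := sum_measure_preimage_singleton (μ := P) (Finset.univ : Finset (Fin N))
        (f := h 0) (fun y _ => hmeas 0 (measurableSet_singleton y))
      simp at h2; exact h2
    calc ∑ k : Fin N, max (f k) 0 = ∑ k : Fin N, (P {ω | h 0 ω = k}).toReal := by
          simp [hPval]
      _ = (∑ k : Fin N, P {ω | h 0 ω = k}).toReal :=
          (ENNReal.toReal_sum (fun k _ => measure_ne_top P _)).symm
      _ = 1 := by rw [h1]; simp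
  have hfj_pos : 0 < f jstar := by
    by_contra hle
    push_neg at hle
    have hz : ∑ k : Fin N, max (f k) 0 = 0 := Finset.sum_eq_zero fun k _ => by
      rcases eq_or_ne k jstar with rfl | hk
      · exact max_eq_right hle
      · exact max_eq_right ((hf k hk).le.trans hle)
    rw [hz] at hsum_max
    norm_num at hsum_max
  have hfj_le1 : f jstar ≤ 1 := by
    have h1 : max (f jstar) 0 ≤ 1 := hsum_max ▸ Finset.single_le_sum
      (f := fun k => max (f k) 0) (fun k _ => le_max_right _ _) (Finset.mem_univ jstar)
    exact (le_max_left _ _).trans h1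
  have hsq : ∀ i, i ≠ jstar → Real.sqrt (f i) < Real.sqrt (f jstar) := by
    intro i hi
    rcases le_or_gt (f i) 0 with h0 | h0
    · rw [Real.sqrt_eq_zero'.mpr h0]
      exact Real.sqrt_pos.mpr hfj_pos
    · exact Real.sqrt_lt_sqrt h0.le (hf i hi)
  have hd_le1 : ∀ i, i ≠ jstar → (Real.sqrt (f jstar) - Real.sqrt (f i)) ^ 2 ≤ 1 := by
    intro i hi
    have h1 : (Real.sqrt (f jstar) - Real.sqrt (f i)) ^ 2 ≤ Real.sqrt (f jstar) ^ 2 := by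
      apply pow_le_pow_left₀ (sub_nonneg.mpr (hsq i hi).le)
      exact sub_le_self _ (Real.sqrt_nonneg _)
    rw [Real.sq_sqrt hfj_pos.le] at h1
    exact h1.trans hfj_le1
  -- key Chernoff bound
  have key : ∀ (t : ℕ) (i : Fin N), i ≠ jstar →
      (P {ω | A t ω = i}).toReal ≤
        (1 - (Real.sqrt (f jstar) - Real.sqrt (f i)) ^ 2) ^ (t + 1) := by
    intro t i hi
    rcases le_or_gt (f i) 0 with hfi0 | hfi0
    · -- the arm i is (a.s.) never pulled by the human
      have hsub : {ω | A t ω = i} ⊆ ⋃ s ∈ Finset.range (t + 1), {ω | h s ω = i} := by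
        intro ω hω
        simp only [Set.mem_setOf_eq] at hω
        have h1 : 0 < ((Finset.range (t + 1)).filter fun s => h s ω = A t ω).card := by
          refine lt_of_lt_of_le ?_ (hAfreq t ω (h t ω))
          refine Finset.card_pos.mpr ⟨t, ?_⟩
          simp [Finset.mem_filter, Finset.mem_range]
        obtain ⟨s, hs⟩ := Finset.card_pos.mp h1
        simp only [Finset.mem_filter, Finset.mem_range] at hs
        refine Set.mem_biUnion (show s ∈ Finset.range (t+1) by simp [hs.1]) ?_
        simp only [Set.mem_setOf_eq]
        rw [hs.2, hω]
      have hP0 : P {ω | A t ω = i} = 0 := by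
        refine le_antisymm ?_ (by simp)
        calc P {ω | A t ω = i} ≤ ∑ s ∈ Finset.range (t + 1), P {ω | h s ω = i} :=
            (measure_mono hsub).trans (measure_biUnion_finset_le _ _)
          _ = 0 := Finset.sum_eq_zero fun s _ => by
              rw [hdist s i, ENNReal.ofReal_eq_zero.mpr hfi0]
      rw [hP0, ENNReal.toReal_zero]
      exact pow_nonneg (sub_nonneg.mpr (hd_le1 i hi)) _
    · -- Chernoff bound
      have hsqi_pos : 0 < Real.sqrt (f i) := Real.sqrt_pos.mpr hfi0
      have hsqj_pos : 0 < Real.sqrt (f jstar) := Real.sqrt_pos.mpr hfj_pos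
      set a : ℝ := Real.sqrt (f jstar) / Real.sqrt (f i) with ha
      have ha_pos : 0 < a := div_pos hsqj_pos hsqi_pos
      set lam : ℝ := Real.log a with hlam
      have hlam_nonneg : 0 ≤ lam :=
        Real.log_nonneg (by rw [ha, le_div_iff₀ hsqi_pos, one_mul]; exact (hsq i hi).le)
      set g : Fin N → ℝ := fun k => if k = i then 1 else if k = jstar then -1 else 0 with hg
      set X : ℕ → Ω → ℝ := fun s ω => g (h s ω) with hX
      have hXmeas : ∀ s, Measurable (X s) := fun s =>
        show Measurable fun ω => g (h s ω) from (Measurable.of_discrete (f := g)).comp (hmeas s)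
      have hXindep : iIndepFun X P :=
        hindep.comp (fun _ => g) (fun _ => Measurable.of_discrete)
      have hXbdd : ∀ s ω, |X s ω| ≤ 1 := by
        intro s ω
        simp only [hX, hg]
        split_ifs <;> norm_num
      have hint : ∀ s : ℕ, Integrable (fun ω => Real.exp (lam * X s ω)) P := by
        intro s
        refine (integrable_const (Real.exp |lam|)).mono'
          (((hXmeas s).const_mul lam).exp.aestronglyMeasurable) (ae_of_all _ fun ω => ?_)
        rw [Real.norm_eq_abs, abs_of_pos (Real.exp_pos _)]
        refine Real.exp_le_exp.mpr ?_
        calc lam * X s ω ≤ |lam * X s ω| := le_abs_self _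
          _ = |lam| * |X s ω| := abs_mul _ _
          _ ≤ |lam| * 1 := mul_le_mul_of_nonneg_left (hXbdd s ω) (abs_nonneg _)
          _ = |lam| := mul_one _
      have hgi : g i = 1 := by simp [hg]
      have hgj : g jstar = -1 := by simp [hg, Ne.symm hi]
      have hexp_i : Real.exp (lam * g i) = a := by
        rw [hgi, mul_one]; exact Real.exp_log ha_pos
      have hexp_j : Real.exp (lam * g jstar) = a⁻¹ := by
        rw [hgj, mul_neg_one, Real.exp_neg, Real.exp_log ha_pos]
      have hai : a * f i = Real.sqrt (f jstar) * Real.sqrt (f i) := by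
        rw [ha]
        field_simp
        linear_combination (-1) * Real.mul_self_sqrt hfi0.le
      have haj : a⁻¹ * f jstar = Real.sqrt (f jstar) * Real.sqrt (f i) := by
        rw [ha]
        field_simp
        linear_combination (-1) * Real.mul_self_sqrt hfj_pos.le
      have hmgf : ∀ s : ℕ, mgf (X s) P lam =
          1 - (Real.sqrt (f jstar) - Real.sqrt (f i)) ^ 2 := by
        intro s
        have h1 : mgf (X s) P lam =
            ∑ k : Fin N, Real.exp (lam * g k) * (P {ω | h s ω = k}).toReal :=
          integral_comp_fin' P (h s) (hmeas s) (fun k => Real.exp (lam * g k))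
        rw [h1]
        simp_rw [hPval s]
        have h2 : ∀ k : Fin N, Real.exp (lam * g k) * max (f k) 0 =
            max (f k) 0
              + (if k = i then Real.sqrt (f jstar) * Real.sqrt (f i) - max (f i) 0 else 0)
              + (if k = jstar then Real.sqrt (f jstar) * Real.sqrt (f i) - max (f jstar) 0 else 0) := by
          intro k
          rcases eq_or_ne k i with rfl | hki
          · rw [if_pos rfl, if_neg hi, hexp_i, max_eq_left hfi0.le, hai]
            ring
          · rcases eq_or_ne k jstar with rfl | hkj
            · rw [if_neg hki, if_pos rfl, hexp_j, max_eq_left hfj_pos.le, haj]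
              ring
            · have : g k = 0 := by simp [hg, hki, hkj]
              rw [if_neg hki, if_neg hkj, this, mul_zero, Real.exp_zero]
              ring
        simp_rw [h2]
        rw [Finset.sum_add_distrib, Finset.sum_add_distrib, hsum_max,
          Finset.sum_ite_eq' Finset.univ i, Finset.sum_ite_eq' Finset.univ jstar,
          if_pos (Finset.mem_univ i), if_pos (Finset.mem_univ jstar),
          max_eq_left hfi0.le, max_eq_left hfj_pos.le]
        linear_combination Real.sq_sqrt hfj_pos.le + Real.sq_sqrt hfi0.le
      set Ssum : Ω → ℝ := ∑ s ∈ Finset.range (t + 1), X s with hS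
      have hsub : {ω | A t ω = i} ⊆ {ω | (0:ℝ) ≤ Ssum ω} := by
        intro ω hω
        simp only [Set.mem_setOf_eq] at hω ⊢
        have hcount := hAfreq t ω jstar
        rw [hω] at hcount
        have hSval : Ssum ω =
            (((Finset.range (t + 1)).filter fun s => h s ω = i).card : ℝ)
              - (((Finset.range (t + 1)).filter fun s => h s ω = jstar).card : ℝ) := by
          simp only [hS, Finset.sum_apply]
          have h3 : ∀ s : ℕ, X s ω =
              (if h s ω = i then (1:ℝ) else 0) - (if h s ω = jstar then 1 else 0) := by
            intro s
            simp only [hX, hg]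
            rcases eq_or_ne (h s ω) i with he | he
            · rw [if_pos he, if_pos he, if_neg (fun hc => hi (he.symm.trans hc))]
              norm_num
            · rw [if_neg he, if_neg he]
              by_cases hj : h s ω = jstar <;> simp [hj]
          simp_rw [h3, Finset.sum_sub_distrib, Finset.sum_boole]
        rw [hSval, sub_nonneg]
        exact_mod_cast hcount
      have hchern : (P {ω | (0:ℝ) ≤ Ssum ω}).toReal ≤
          (1 - (Real.sqrt (f jstar) - Real.sqrt (f i)) ^ 2) ^ (t + 1) := by
        have hint' : Integrable (fun ω => Real.exp (lam * Ssum ω)) P :=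
          hXindep.integrable_exp_mul_sum hXmeas (fun s _ => hint s)
        have hb := measure_ge_le_exp_mul_mgf (X := Ssum) (μ := P) 0 hlam_nonneg hint'
        rw [mul_zero, Real.exp_zero, one_mul] at hb
        calc (P {ω | (0:ℝ) ≤ Ssum ω}).toReal ≤ mgf Ssum P lam := hb
          _ = ∏ s ∈ Finset.range (t + 1), mgf (X s) P lam := hXindep.mgf_sum hXmeas _
          _ = (1 - (Real.sqrt (f jstar) - Real.sqrt (f i)) ^ 2) ^ (t + 1) := by
              rw [Finset.prod_congr rfl (fun s _ => hmgf s), Finset.prod_const,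
                Finset.card_range]
      exact (ENNReal.toReal_mono (measure_ne_top _ _) (measure_mono hsub)).trans hchern
  -- per-round regret identity
  have regret_t : ∀ t, ∫ ω, (μa jstar - μa (A t ω)) ∂P =
      ∑ i ∈ Finset.univ.filter (· ≠ jstar),
        (μa jstar - μa i) * (P {ω | A t ω = i}).toReal := by
    intro t
    have hrw : (fun ω => μa jstar - μa (A t ω)) = fun ω =>
        ∑ i ∈ Finset.univ.filter (· ≠ jstar),
          Set.indicator {ω' | A t ω' = i} (fun _ => μa jstar - μa i) ω := by
      funext ω
      rcases eq_or_ne (A t ω) jstar with he | he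
      · rw [he, sub_self]
        symm
        refine Finset.sum_eq_zero fun i hi => ?_
        refine Set.indicator_of_notMem ?_ _
        intro hc
        exact (Finset.mem_filter.mp hi).2 (by rw [← hc, he])
      · symm
        rw [Finset.sum_eq_single (A t ω)]
        · rw [Set.indicator_of_mem (by exact rfl)]
        · intro b _ hb
          exact Set.indicator_of_notMem (fun hc => hb (by simpa using hc.symm)) _
        · intro hn
          exact absurd (Finset.mem_filter.mpr ⟨Finset.mem_univ (A t ω), show (fun x => x ≠ jstar) (A t ω) from he⟩) hn
    rw [hrw, integral_finset_sum]
    · refine Finset.sum_congr rfl fun i _ => ?_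
      rw [integral_indicator_const (μ := P) (μa jstar - μa i) (s := {ω' | A t ω' = i})
        (hAm t (measurableSet_singleton i))]
      rw [smul_eq_mul, mul_comm]; rfl
    · intro i _
      exact (integrable_const _).indicator (hAm t (measurableSet_singleton i))
  -- final assembly
  calc ∑ t ∈ Finset.range T, ∫ ω, (μa jstar - μa (A t ω)) ∂P
      = ∑ t ∈ Finset.range T, ∑ i ∈ Finset.univ.filter (· ≠ jstar),
          (μa jstar - μa i) * (P {ω | A t ω = i}).toReal :=
        Finset.sum_congr rfl fun t _ => regret_t t
    _ = ∑ i ∈ Finset.univ.filter (· ≠ jstar), ∑ t ∈ Finset.range T,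
          (μa jstar - μa i) * (P {ω | A t ω = i}).toReal := Finset.sum_comm
    _ ≤ ∑ i ∈ Finset.univ.filter (· ≠ jstar),
          (μa jstar - μa i) / (Real.sqrt (f jstar) - Real.sqrt (f i)) ^ 2 := by
        refine Finset.sum_le_sum fun i hi => ?_
        have hi' : i ≠ jstar := (Finset.mem_filter.mp hi).2
        set d : ℝ := (Real.sqrt (f jstar) - Real.sqrt (f i)) ^ 2 with hd
        have hd_pos : 0 < d := pow_pos (sub_pos.mpr (hsq i hi')) 2
        have hρ0 : 0 ≤ 1 - d := sub_nonneg.mpr (hd_le1 i hi')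
        have hρ1 : 1 - d < 1 := by linarith
        have hc : 0 ≤ μa jstar - μa i := sub_nonneg.mpr (hmax i hi').le
        calc ∑ t ∈ Finset.range T, (μa jstar - μa i) * (P {ω | A t ω = i}).toReal
            = (μa jstar - μa i) * ∑ t ∈ Finset.range T, (P {ω | A t ω = i}).toReal :=
              (Finset.mul_sum _ _ _).symm
          _ ≤ (μa jstar - μa i) * d⁻¹ := by
              refine mul_le_mul_of_nonneg_left ?_ hc
              calc ∑ t ∈ Finset.range T, (P {ω | A t ω = i}).toReal
                  ≤ ∑ t ∈ Finset.range T, (1 - d) ^ t := by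
                    refine Finset.sum_le_sum fun t _ => ?_
                    exact (key t i hi').trans
                      (pow_le_pow_of_le_one hρ0 (by linarith) (Nat.le_succ t))
                _ ≤ ∑' t : ℕ, (1 - d) ^ t :=
                    Summable.sum_le_tsum _ (fun n _ => pow_nonneg hρ0 n)
                      (summable_geometric_of_lt_one hρ0 hρ1)
                _ = (1 - (1 - d))⁻¹ := tsum_geometric_of_lt_one hρ0 hρ1
                _ = d⁻¹ := by ring_nf
          _ = (μa jstar - μa i) / d := (div_eq_mul_inv _ _).symm
end

section
/- Let 0 < μ < θ < 1 and let Y_1, Y_2, … be i.i.d. Bernoulli(θ). Consider the greedy process on two arms, where arm 0 has known deterministic value μ and arm 1 is the Bernoulli arm: arm 1 is pulled at time 1; thereafter, at each time t, arm 1 is pulled if and only if the empirical mean of the arm-1 rewards observed so far is at least μ. Let R(T) = (θ - μ)·#{t ≤ T : arm 0 is pulled at time t} be the regret up to time T. Then liminf_{T→∞} E[R(T)]/T ≥ (1 - θ)(θ - μ) > 0; in particular the process is inconsistent (its expected average regret does not converge to 0). -/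
open MeasureTheory ProbabilityTheory Filter
open scoped Classical

noncomputable def arm1Pulls (μ : ℝ) (y : ℕ → ℝ) : ℕ → ℕ
  | 0 => 0
  | 1 => 1
  | (t + 2) =>
      arm1Pulls μ y (t + 1) +
        if μ ≤ (∑ n ∈ Finset.range (arm1Pulls μ y (t + 1)), y n) / (arm1Pulls μ y (t + 1) : ℝ)
        then 1 else 0

lemma arm1Pulls_le (μ : ℝ) (y : ℕ → ℝ) : ∀ t, arm1Pulls μ y t ≤ t
  | 0 => le_refl _
  | 1 => le_refl _
  | (t + 2) => by
      have h := arm1Pulls_le μ y (t + 1)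
      simp only [arm1Pulls]
      split <;> omega

lemma arm1Pulls_eq_one (μ : ℝ) (y : ℕ → ℝ) (hμ : 0 < μ) (hy0 : y 0 = 0) :
    ∀ t, 1 ≤ t → arm1Pulls μ y t = 1
  | 1, _ => rfl
  | (t + 2), _ => by
      have h := arm1Pulls_eq_one μ y hμ hy0 (t + 1) (by omega)
      simp only [arm1Pulls, h]
      rw [if_neg (by simp [Finset.sum_range_one, hy0, hμ])]

lemma arm1Pulls_measurable {Ω : Type*} [MeasurableSpace Ω]
    (μ : ℝ) (Y : ℕ → Ω → ℝ) (hY : ∀ n, Measurable (Y n)) :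
    ∀ t, Measurable (fun ω => arm1Pulls μ (Y · ω) t) := by
  intro t
  induction t with
  | zero => simp [arm1Pulls]
  | succ t ih =>
    cases t with
    | zero => simp [arm1Pulls]
    | succ s =>
      simp only [arm1Pulls]
      apply ih.add
      apply Measurable.ite _ measurable_const measurable_const
      have : {ω : Ω | μ ≤ (∑ n ∈ Finset.range (arm1Pulls μ (Y · ω) (s + 1)), Y n ω) /
          ((arm1Pulls μ (Y · ω) (s + 1) : ℝ))} =
          ⋃ k : ℕ, ({ω | arm1Pulls μ (Y · ω) (s + 1) = k} ∩
            {ω | μ ≤ (∑ n ∈ Finset.range k, Y n ω) / (k : ℝ)}) := by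
        ext ω
        simp only [Set.mem_setOf_eq, Set.mem_iUnion, Set.mem_inter_iff]
        constructor
        · intro h
          exact ⟨arm1Pulls μ (Y · ω) (s + 1), rfl, h⟩
        · rintro ⟨k, hk, h⟩
          rw [hk]; exact h
      rw [this]
      apply MeasurableSet.iUnion
      intro k
      apply MeasurableSet.inter
      · exact ih (measurableSet_singleton k)
      · exact measurableSet_le measurable_const
          ((Finset.measurable_sum _ (fun n _ => hY n)).div_const _)

/-- inconsistency of the greedy learner on a `1½`-arm bandit. With
`0 < μ < θ < 1`, arm 0 of known value `μ` and arm 1 with i.i.d. Bernoulli(θ) rewards,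
the regret up to time `T` is `R(T) = (θ - μ) · #{t ≤ T : arm 0 pulled}`. Then
`liminf_T E[R(T)]/T ≥ (1 - θ)(θ - μ) > 0`; in particular the expected average regret
does not converge to `0`. -/
theorem greedy_inconsistent {Ω : Type*} [MeasurableSpace Ω]
    (P : Measure Ω) [IsProbabilityMeasure P]
    (μval θ : ℝ) (hμ : 0 < μval) (hμθ : μval < θ) (hθ : θ < 1)
    (Y : ℕ → Ω → ℝ) (hY : ∀ n, Measurable (Y n))
    (hindep : iIndepFun Y P)
    (hval : ∀ n ω, Y n ω = 0 ∨ Y n ω = 1)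
    (hdist : ∀ n, P {ω | Y n ω = 1} = ENNReal.ofReal θ) :
    0 < (1 - θ) * (θ - μval) ∧
    (1 - θ) * (θ - μval) ≤
      atTop.liminf (fun T : ℕ =>
        (∫ ω, (θ - μval) * ((T : ℝ) - (arm1Pulls μval (Y · ω) T : ℝ)) ∂P) / T) ∧
    ¬ Tendsto (fun T : ℕ =>
        (∫ ω, (θ - μval) * ((T : ℝ) - (arm1Pulls μval (Y · ω) T : ℝ)) ∂P) / T)
      atTop (nhds 0) := by
  have hθμ : 0 < θ - μval := sub_pos.mpr hμθ
  have h1θ : 0 < 1 - θ := sub_pos.mpr hθ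
  have hθ0 : (0:ℝ) ≤ θ := le_of_lt (lt_trans hμ hμθ)
  have hc : 0 < (1 - θ) * (θ - μval) := mul_pos h1θ hθμ
  set g : ℕ → Ω → ℝ := fun T ω => (θ - μval) * ((T : ℝ) - (arm1Pulls μval (Y · ω) T : ℝ))
    with hg
  set a : ℕ → ℝ := fun T => (∫ ω, g T ω ∂P) / T with ha
  -- measurability and integrability
  have hfm : ∀ T, Measurable (fun ω => arm1Pulls μval (Y · ω) T) :=
    arm1Pulls_measurable μval Y hY
  have hgm : ∀ T, Measurable (g T) := by
    intro T
    apply Measurable.const_mul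
    exact measurable_const.sub ((measurable_from_top).comp (hfm T))
  have hg_nonneg : ∀ T ω, 0 ≤ g T ω := by
    intro T ω
    exact mul_nonneg hθμ.le
      (sub_nonneg.mpr (by exact_mod_cast arm1Pulls_le μval (Y · ω) T))
  have hgi : ∀ T, Integrable (g T) P := by
    intro T
    refine (integrable_const ((θ - μval) * T)).mono' (hgm T).aestronglyMeasurable
      (ae_of_all _ fun ω => ?_)
    rw [Real.norm_eq_abs, abs_of_nonneg (hg_nonneg T ω)]
    apply mul_le_mul_of_nonneg_left _ hθμ.le
    have h1 : (0:ℝ) ≤ (arm1Pulls μval (Y · ω) T : ℝ) := Nat.cast_nonneg _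
    linarith
  -- the event that the first Bernoulli reward is 0
  set A : Set Ω := (Y 0) ⁻¹' {0} with hAdef
  have hA : MeasurableSet A := hY 0 (measurableSet_singleton 0)
  have hAeq : A = {ω | Y 0 ω = 1}ᶜ := by
    ext ω
    simp only [hAdef, Set.mem_preimage, Set.mem_singleton_iff, Set.mem_compl_iff,
      Set.mem_setOf_eq]
    constructor
    · intro h h1; rw [h] at h1; norm_num at h1
    · intro h; rcases hval 0 ω with h0 | h1
      · exact h0
      · exact absurd h1 h
  have hmeas1 : MeasurableSet {ω | Y 0 ω = 1} := hY 0 (measurableSet_singleton 1)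
  have hPA : P A = ENNReal.ofReal (1 - θ) := by
    rw [hAeq, measure_compl hmeas1 (measure_ne_top _ _), hdist 0, measure_univ,
      show (1:ENNReal) = ENNReal.ofReal 1 from ENNReal.ofReal_one.symm,
      ← ENNReal.ofReal_sub _ hθ0]
  have hPAr : (P A).toReal = 1 - θ := by
    rw [hPA, ENNReal.toReal_ofReal (by linarith)]
  -- key integral lower bound
  have key : ∀ T : ℕ, 1 ≤ T → (θ - μval) * ((T:ℝ) - 1) * (1 - θ) ≤ ∫ ω, g T ω ∂P := by
    intro T hT
    have hstep1 : (θ - μval) * ((T:ℝ) - 1) * (1 - θ) =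
        ∫ ω in A, (θ - μval) * ((T:ℝ) - 1) ∂P := by
      rw [setIntegral_const]; change _ = (P A).toReal • _; rw [hPAr, smul_eq_mul]; ring
    have hstep2 : ∫ ω in A, (θ - μval) * ((T:ℝ) - 1) ∂P ≤ ∫ ω in A, g T ω ∂P := by
      apply setIntegral_mono_on ((integrableOn_const_iff).mpr (Or.inr (measure_lt_top _ _)))
        ((hgi T).integrableOn) hA
      intro ω hω
      have hy0 : Y 0 ω = 0 := hω
      have hone : arm1Pulls μval (Y · ω) T = 1 :=
        arm1Pulls_eq_one μval (Y · ω) hμ hy0 T hT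
      simp only [hg, hone, Nat.cast_one]
      exact le_refl _
    have hstep3 : ∫ ω in A, g T ω ∂P ≤ ∫ ω, g T ω ∂P :=
      setIntegral_le_integral (hgi T) (ae_of_all _ (hg_nonneg T))
    linarith
  -- the comparison sequence and its limit
  set c : ℝ := (1 - θ) * (θ - μval) with hcdef
  have hblim : Tendsto (fun T : ℕ => c * (((T:ℝ) - 1) / T)) atTop (nhds c) := by
    have h1 : Tendsto (fun T : ℕ => ((T:ℝ) - 1) / T) atTop (nhds 1) := by
      have h0 : Tendsto (fun T : ℕ => 1 - 1 / (T:ℝ)) atTop (nhds 1) := by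
        simpa using (tendsto_const_nhds : Tendsto (fun _ : ℕ => (1:ℝ)) atTop (nhds 1)).sub tendsto_one_div_atTop_nhds_zero_nat
      apply h0.congr'
      filter_upwards [eventually_ge_atTop 1] with T hT
      have hTpos : (0:ℝ) < T := by exact_mod_cast hT
      field_simp
    simpa using h1.const_mul c
  have hab : ∀ᶠ T : ℕ in atTop, c * (((T:ℝ) - 1) / T) ≤ a T := by
    filter_upwards [eventually_ge_atTop 1] with T hT
    have hTpos : (0:ℝ) < T := by exact_mod_cast hT
    have hk := key T hT
    have heq : c * (((T:ℝ) - 1) / T) = ((θ - μval) * ((T:ℝ) - 1) * (1 - θ)) / T := by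
      rw [hcdef]; ring
    rw [heq, ha]
    exact div_le_div_of_nonneg_right hk hTpos.le
  have hanonneg : ∀ T, 0 ≤ a T := by
    intro T
    exact div_nonneg (integral_nonneg (hg_nonneg T)) (Nat.cast_nonneg T)
  have hub : ∀ T : ℕ, a T ≤ θ - μval := by
    intro T
    rcases Nat.eq_zero_or_pos T with h | h
    · simp only [ha, h, Nat.cast_zero, div_zero]
      linarith
    · have hTpos : (0:ℝ) < T := by exact_mod_cast h
      have hib : ∫ ω, g T ω ∂P ≤ (θ - μval) * T := by
        have := integral_mono (hgi T) (integrable_const ((θ - μval) * T))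
          (fun ω => by
            apply mul_le_mul_of_nonneg_left _ hθμ.le
            have h1 : (0:ℝ) ≤ (arm1Pulls μval (Y · ω) T : ℝ) := Nat.cast_nonneg _
            linarith)
        simpa [integral_const, measure_univ] using this
      rw [ha]
      exact (div_le_iff₀ hTpos).mpr hib
  have hlb : c ≤ atTop.liminf a := by
    have hbb : IsBoundedUnder (· ≥ ·) atTop (fun T : ℕ => c * (((T:ℝ) - 1) / T)) :=
      hblim.isBoundedUnder_ge
    have hcba : IsCoboundedUnder (· ≥ ·) atTop a :=
      isCoboundedUnder_ge_of_le atTop hub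
    calc c = atTop.liminf (fun T : ℕ => c * (((T:ℝ) - 1) / T)) := hblim.liminf_eq.symm
      _ ≤ atTop.liminf a := liminf_le_liminf hab hbb hcba
  refine ⟨hc, hlb, ?_⟩
  intro htend
  have h0 : atTop.liminf a = 0 := htend.liminf_eq
  rw [h0] at hlb
  linarith
end

section
/- Fix N ≥ 2, a horizon T, and a reward realization ρ : {1,…,T} × {1,…,N} → {0,1} (ρ(t,k) is the reward obtained if arm k is pulled at round t). Let K be any bandit strategy, i.e. a function mapping each history ((a_1, r_1), …, (a_{t-1}, r_{t-1})) of arms and binary rewards to an arm K_t ∈ {1,…,N}. Suppose the human plays win-stay-lose-shift: h_1 is arbitrary, and for t ≥ 2, h_t = a_{t-1} if r_{t-1} = 1 and h_t ≠ a_{t-1} if r_{t-1} = 0. Define the robot strategy A as follows: at round t it decodes r̂_{t-1} = 1 if h_t = a_{t-1} and r̂_{t-1} = 0 otherwise, and plays a_t = K_t((a_1, r̂_1), …, (a_{t-1}, r̂_{t-1})). Then for every sequence of human suggestions consistent with WSLS, the executed arm sequence (a_1, …, a_T) equals the arm sequence that K itself would produce when run directly on the reward realization ρ; in particular the two incur identical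 rewards and identical regret. -/
/-- The history of (arm, reward) pairs produced by running the bandit strategy `K`
directly on the reward realization `ρ` for `t` rounds. -/
def directHist {N : ℕ} (K : List (Fin N × Fin 2) → Fin N) (ρ : ℕ → Fin N → Fin 2) :
    ℕ → List (Fin N × Fin 2)
  | 0 => []
  | t + 1 =>
      directHist K ρ t ++ [(K (directHist K ρ t), ρ t (K (directHist K ρ t)))]

/-- The arm that the bandit strategy `K`, run directly on the reward realization `ρ`,
pulls at round `t`. -/
def directRun {N : ℕ} (K : List (Fin N × Fin 2) → Fin N) (ρ : ℕ → Fin N → Fin 2)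
    (t : ℕ) : Fin N :=
  K (directHist K ρ t)

/-- a WSLS human lets the robot simulate any bandit strategy. Suppose
the human plays win-stay-lose-shift (`h (t+1) = a t` iff round `t`'s reward was `1`),
and the robot at each round decodes the previous reward as `1` iff `h (t+1) = a t`
and plays the strategy `K` on the decoded history. Then the executed arm sequence
equals the arm sequence `K` would produce when run directly on the reward realization
`ρ`; in particular the rewards incurred are identical. -/
theorem wsls_simulates_any_strategy {N : ℕ} (hN : 2 ≤ N) (T : ℕ)
    (ρ : ℕ → Fin N → Fin 2) (K : List (Fin N × Fin 2) → Fin N)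
    (h a : ℕ → Fin N)
    (hWSLS : ∀ t : ℕ,
      (ρ t (a t) = 1 → h (t + 1) = a t) ∧ (ρ t (a t) = 0 → h (t + 1) ≠ a t))
    (hRobot : ∀ t : ℕ, a t =
      K (List.ofFn fun s : Fin t =>
        (a s.val, if h (s.val + 1) = a s.val then (1 : Fin 2) else 0))) :
    ∀ t < T, a t = directRun K ρ t ∧ ρ t (a t) = ρ t (directRun K ρ t) := by
  have key : ∀ t : ℕ,
      (List.ofFn fun s : Fin t =>
        (a s.val, if h (s.val + 1) = a s.val then (1 : Fin 2) else 0))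
        = directHist K ρ t := by
    intro t
    induction t with
    | zero => simp [directHist]
    | succ n ih =>
      have ha : a n = directRun K ρ n := by
        rw [hRobot n, ih]; rfl
      have hdec : (if h (n + 1) = a n then (1 : Fin 2) else 0) = ρ n (a n) := by
        rcases (hWSLS n) with ⟨h1, h0⟩
        have : ρ n (a n) = 0 ∨ ρ n (a n) = 1 := by omega
        rcases this with hr | hr
        · rw [hr, if_neg (h0 hr)]
        · rw [hr, if_pos (h1 hr)]
      rw [List.ofFn_succ', List.concat_eq_append]
      simp only [Fin.val_last, Fin.coe_castSucc]
      rw [ih, directHist, hdec, ha]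
      rfl
  intro t _
  have ha : a t = directRun K ρ t := by rw [hRobot t, key t]; rfl
  exact ⟨ha, by rw [ha]⟩
end
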